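/- Let λ1, λ2, λ3, λ4, λ5 ∈ ℂ and x1, y1, z1 ∈ ℂ satisfy y1 ≠ 0 and λ5 + x1 ≠ 0. Suppose z1² = 4y1³ + a1·y1² + a2·y1 + a3, where a1 = λ2² + 2λ2·x1(1 + x1) + x1(−4λ3(λ5 + x1) + x1((1 + x1)² − 4λ4(λ5 + x1))), a2 = −2λ1·x1³(λ5 + x1)(λ2 + x1 + x1²), and a3 = λ1²·x1⁶(λ5 + x1)². Define x = x1, y = (λ1λ5x1³ + λ1x1⁴ − λ2y1 − x1y1 − x1²y1 + z1)/(2(λ5 + x1)y1), and z = −λ1·x1²(λ5 + x1)/y1. Then x·y·z·(x + y + z + 1) + λ1·x² + λ2·y·z + λ3·x·z + λ4·x²·z + λ5·y²·z = 0. -/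
import Mathlib

theorem stmt_16 (l1 l2 l3 l4 l5 x1 y1 z1 : ℂ)
    (hy1 : y1 ≠ 0) (hl5 : l5 + x1 ≠ 0)
    (heq : z1 ^ 2 = 4 * y1 ^ 3
      + (l2 ^ 2 + 2 * l2 * x1 * (1 + x1)
          + x1 * (-4 * l3 * (l5 + x1) + x1 * ((1 + x1) ^ 2 - 4 * l4 * (l5 + x1)))) * y1 ^ 2
      + (-2 * l1 * x1 ^ 3 * (l5 + x1) * (l2 + x1 + x1 ^ 2)) * y1
      + l1 ^ 2 * x1 ^ 6 * (l5 + x1) ^ 2) :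
    let x := x1
    let y := (l1 * l5 * x1 ^ 3 + l1 * x1 ^ 4 - l2 * y1 - x1 * y1 - x1 ^ 2 * y1 + z1)
        / (2 * (l5 + x1) * y1)
    let z := -(l1 * x1 ^ 2 * (l5 + x1) / y1)
    x * y * z * (x + y + z + 1) + l1 * x ^ 2 + l2 * y * z + l3 * x * z + l4 * x ^ 2 * z
      + l5 * y ^ 2 * z = 0 := by
  intro x y z
  have hD : 2 * (l5 + x1) * y1 ≠ 0 := by
    exact mul_ne_zero (mul_ne_zero two_ne_zero hl5) hy1
  have hy : y * (2 * (l5 + x1) * y1)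
      = l1 * l5 * x1 ^ 3 + l1 * x1 ^ 4 - l2 * y1 - x1 * y1 - x1 ^ 2 * y1 + z1 :=
    div_mul_cancel₀ _ hD
  have hz : z * y1 = -(l1 * x1 ^ 2 * (l5 + x1)) := by
    show -(l1 * x1 ^ 2 * (l5 + x1) / y1) * y1 = _
    rw [neg_mul, div_mul_cancel₀ _ hy1]
  have hx : x = x1 := rfl
  clear_value x y z
  have key : (x * y * z * (x + y + z + 1) + l1 * x ^ 2 + l2 * y * z + l3 * x * z
      + l4 * x ^ 2 * z + l5 * y ^ 2 * z) * y1 ^ 3 = 0 := by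
    rw [hx]
    linear_combination (-(l1 * x1 ^ 2) / 4) * heq
      + (-(l1 * x1 ^ 2) / 4 * (z1 + (2 * (l5 + x1) * y1 * y
          - (l1 * l5 * x1 ^ 3 + l1 * x1 ^ 4 - (l2 + x1 + x1 ^ 2) * y1)))) * hy
      + (y1 ^ 2 * (x1 * y + x1 * y * z + x1 * y ^ 2 + x1 ^ 2 * y + l5 * y ^ 2
          + l4 * x1 ^ 2 + l3 * x1 + l2 * y) - l1 * x1 ^ 3 * y1 * (x1 + l5) * y) * hz
  have h3 : y1 ^ 3 ≠ 0 := pow_ne_zero _ hy1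
  exact (mul_eq_zero.mp key).resolve_right h3
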